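/- There exists an infinite binary string u over the alphabet {a,b}, defined by u = a · ∏_{k>0} \overline{u[k]} · u[1..k] (where \overline{c} denotes the complement of the letter c), such that every finite prefix of the OC array of every prefix of u agrees with the infinite binary sequence ∏_{k>0} 1 0^k = 10 100 1000 10000 ⋯ . Consequently, for every integer N ≥ 1 there is a binary string of length n = Σ_{k=1}^{N}(k+1) whose OC array contains exactly N maximal blocks of 1s, so the O(√n) bound on the number of runs in the OC array is tight. -/

import Mathlib

variable {α : Type*}

/-- `β` is a border of `S`: a proper (possibly empty) prefix that is also a suffix. -/
def IsBorder (β S : List α) : Prop :=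
  β ≠ S ∧ β <+: S ∧ β <:+ S

/-- `v` occurs in `T` at (0-based) position `p`. -/
def OccursAt (v T : List α) (p : ℕ) : Prop :=
  p + v.length ≤ T.length ∧ v <+: T.drop p

/-- A string is closed if it has length 1 or it has a border with no internal occurrence. -/
def IsClosedWord (S : List α) : Prop :=
  S.length = 1 ∨ ∃ β, IsBorder β S ∧
    ∀ p, OccursAt β S p → p = 0 ∨ p = S.length - β.length

open Classical in
/-- `OCval S i = 1` if the prefix `S[1..i]` is closed, and `0` otherwise. -/
noncomputable def OCval (S : List α) (i : ℕ) : ℕ :=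
  if IsClosedWord (S.take i) then 1 else 0

/-- `Parr S i` is the length of the longest prefix of `S[1..i]` having at least
two (possibly overlapping) occurrences in `S[1..i]`. -/
noncomputable def Parr (S : List α) (i : ℕ) : ℕ :=
  sSup {ℓ | ∃ p q : ℕ, p < q ∧ OccursAt (S.take ℓ) (S.take i) p ∧
    OccursAt (S.take ℓ) (S.take i) q}

/-- `Barr S i` is the length of the longest border of `S[1..i]`. -/
noncomputable def Barr (S : List α) (i : ℕ) : ℕ :=
  sSup {ℓ | IsBorder (S.take ℓ) (S.take i)}

/-- `Bord S i` is the set of lengths of borders of `S[1..i]`. -/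
def Bord (S : List α) (i : ℕ) : Set ℕ :=
  {ℓ | IsBorder (S.take ℓ) (S.take i)}

/-- The substring `S[i..j]` (1-based, inclusive). -/
def Substr (S : List α) (i j : ℕ) : List α :=
  (S.take j).drop (i - 1)

/-- `S[i..j]` is a maximal closed substring of `S`. -/
def IsMCS (S : List α) (i j : ℕ) : Prop :=
  1 ≤ i ∧ i ≤ j ∧ j ≤ S.length ∧ IsClosedWord (Substr S i j) ∧
    (j = S.length ∨ ¬ IsClosedWord (Substr S i (j + 1))) ∧
    (i = 1 ∨ ¬ IsClosedWord (Substr S (i - 1) j))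

open Classical in
/-- Number of maximal blocks of consecutive `1`s in the OC array of `S`. -/
noncomputable def ocRuns (S : List α) : ℕ :=
  ((Finset.Icc 1 S.length).filter
    (fun i => OCval S i = 1 ∧ (i = 1 ∨ OCval S (i - 1) = 0))).card

/-- The OC array of `S` as a list (1-based entries). -/
noncomputable def ocList (S : List α) : List ℕ :=
  (List.range S.length).map (fun j => OCval S (j + 1))


-- triangular numbers
def tri : ℕ → ℕ
  | 0 => 0
  | (n+1) => tri n + (n+1)

-- the word, as a sequence of increasing prefixes W m of length tri m
def W : ℕ → List Bool
  | 0 => []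
  | 1 => [true]
  | (m+2) => W (m+1) ++ (!((W (m+1)).getD m true)) :: (W (m+1)).take (m+1)

def uu (n : ℕ) : Bool := (W (n+1)).getD n true

def Ln (n : ℕ) : List Bool := (List.range n).map uu

lemma tri_succ (n : ℕ) : tri (n+1) = tri n + (n+1) := rfl

lemma le_tri : ∀ n, n ≤ tri n := by
  intro n; induction n with
  | zero => simp [tri]
  | succ k ih => rw [tri_succ]; omega

lemma triSM : StrictMono tri := strictMono_nat_of_lt_succ (fun n => by rw [tri_succ]; omega)

lemma W_length : ∀ m, (W m).length = tri m := by
  intro m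
  induction m using Nat.strong_induction_on with
  | _ m IH =>
    match m with
    | 0 => rfl
    | 1 => rfl
    | (k+2) =>
      have h1 := IH (k+1) (by omega)
      simp [W, h1, tri_succ]

lemma W_prefix (m : ℕ) : W m <+: W (m+1) := by
  match m with
  | 0 => exact List.nil_prefix
  | (k+1) => exact ⟨_, rfl⟩

lemma W_prefix_le {a b : ℕ} (h : a ≤ b) : W a <+: W b := by
  induction b with
  | zero => simp_all
  | succ k ih =>
    rcases Nat.eq_or_lt_of_le h with h1 | h1
    · subst h1; exact List.prefix_refl _
    · exact (ih (by omega)).trans (W_prefix k)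

lemma W_getElem {m i : ℕ} (h : i < (W m).length) : (W m)[i] = uu i := by
  have hi : i < tri (i+1) := lt_of_lt_of_le (by omega) (le_tri (i+1))
  have hi' : i < (W (i+1)).length := by rw [W_length]; exact hi
  have huu : uu i = (W (i+1))[i] := List.getD_eq_getElem _ _ hi'
  rw [huu]
  rcases le_total m (i+1) with hle | hle
  · exact (W_prefix_le hle).getElem h
  · exact ((W_prefix_le hle).getElem hi').symm

lemma Ln_length (n : ℕ) : (Ln n).length = n := by simp [Ln]

lemma Ln_getElem {n i : ℕ} (h : i < n) : (Ln n)[i]'(by simp [Ln_length, h]) = uu i := by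
  simp [Ln]

lemma Ln_get? {n i : ℕ} (h : i < n) : (Ln n)[i]? = some (uu i) := by
  simp [Ln, List.getElem?_map, List.getElem?_range h]

lemma Ln_take (a b : ℕ) : (Ln a).take b = Ln (min b a) := by
  simp [Ln, ← List.map_take, List.take_range]

lemma Ln_tri : ∀ m, Ln (tri m) = W m := by
  intro m
  apply List.ext_getElem (by simp [Ln_length, W_length])
  intro i h1 h2
  rw [Ln_getElem (by simpa [Ln_length] using h1), W_getElem h2]

lemma Ln_prefix {a b : ℕ} (h : a ≤ b) : Ln a <+: Ln b := by
  have : (Ln b).take a = Ln a := by rw [Ln_take]; congr 1; omega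
  rw [← this]; exact List.take_prefix _ _

example : True := trivial

lemma Ln_tri_succ (j : ℕ) :
    Ln (tri (j+2)) = Ln (tri (j+1)) ++ (!(uu j)) :: Ln (j+1) := by
  have h : j < (W (j+1)).length := by
    rw [W_length]; exact lt_of_lt_of_le (by omega) (le_tri (j+1))
  have hg : (!((W (j+1)).getD j true)) = !(uu j) := by
    rw [List.getD_eq_getElem _ _ h, W_getElem h]
  have ht : (W (j+1)).take (j+1) = Ln (j+1) := by
    rw [← Ln_tri, Ln_take]
    congr 1
    have := le_tri (j+1); omega
  rw [Ln_tri, Ln_tri]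
  show W (j+2) = _
  rw [W, hg, ht]

lemma struct (q s : ℕ) (hq : 1 ≤ q) (hs : s ≤ q) :
    Ln (tri q + 1 + s) = Ln (tri q) ++ (!(uu (q-1))) :: Ln s := by
  obtain ⟨j, rfl⟩ : ∃ j, q = j + 1 := ⟨q - 1, by omega⟩
  have key := Ln_tri_succ j
  have h1 : tri (j+1) + 1 + s ≤ tri (j+2) := by rw [tri_succ (j+1)]; omega
  have h2 : (Ln (tri (j+2))).take (tri (j+1) + 1 + s) = Ln (tri (j+1) + 1 + s) := by
    rw [Ln_take]; congr 1; omega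
  have h3 : tri (j+1) + 1 + s = (Ln (tri (j+1))).length + (1 + s) := by
    rw [Ln_length]; omega
  calc Ln (tri (j+1) + 1 + s)
      = (Ln (tri (j+1)) ++ (!uu j) :: Ln (j+1)).take ((Ln (tri (j+1))).length + (1+s)) := by
        rw [← h3, ← key]; exact h2.symm
    _ = Ln (tri (j+1)) ++ ((!uu j) :: Ln (j+1)).take (1+s) := List.take_length_add_append _
    _ = Ln (tri (j+1)) ++ (!uu j) :: (Ln (j+1)).take s := by
        rw [Nat.add_comm 1 s, List.take_succ_cons]
    _ = Ln (tri (j+1)) ++ (!uu j) :: Ln s := by rw [Ln_take, Nat.min_eq_left hs]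

-- suffix of longer suffix
lemma suffix_of_suffix_len_le {x y z : List Bool} (hx : x <:+ z) (hy : y <:+ z)
    (h : x.length ≤ y.length) : x <:+ y := by
  rw [← List.reverse_prefix] at hx hy ⊢
  exact List.prefix_of_prefix_length_le hx hy (by simpa using h)

lemma decomp : ∀ n, 1 ≤ n → ∃ q s, s ≤ q ∧ n = tri q + 1 + s := by
  intro n hn
  induction n with
  | zero => omega
  | succ k ih =>
    rcases Nat.eq_or_lt_of_le hn with h | h
    · exact ⟨0, 0, le_refl 0, by simp [tri, ← h]⟩
    · obtain ⟨q, s, h1, h2⟩ := ih (by omega)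
      rcases Nat.lt_or_ge s q with h3 | h3
      · exact ⟨q, s + 1, by omega, by omega⟩
      · refine ⟨q + 1, 0, by omega, ?_⟩
        rw [tri_succ]; omega

lemma const_of {c : Bool} {d : ℕ} (h : Ln (d+1) = c :: Ln d) : ∀ i ≤ d, uu i = c := by
  have h0 : uu 0 = c := by
    have := congrArg (fun l => l[0]?) h
    simpa [Ln_get? (show 0 < d + 1 by omega)] using this
  have hstep : ∀ i, i < d → uu (i+1) = uu i := by
    intro i hi
    have := congrArg (fun l => l[i+1]?) h
    simp only [Ln_get? (show i + 1 < d + 1 by omega), List.getElem?_cons_succ,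
      Ln_get? hi] at this
    exact Option.some.inj this
  intro i
  induction i with
  | zero => intro _; exact h0
  | succ k ih => intro hk; rw [hstep k (by omega)]; exact ih (by omega)

-- tri small values
lemma tri_lb : ∀ x, 2 ≤ x → 2 * x ≤ tri x + 1 := by
  intro x hx
  induction x with
  | zero => omega
  | succ k ih =>
    rcases Nat.lt_or_ge k 2 with h | h
    · interval_cases k <;> simp [tri] <;> omega
    · have := ih (by omega); rw [tri_succ]; omega

lemma arith {w p q r s : ℕ} (hr : 1 ≤ r) (hrw : r ≤ w) (hsp : s ≤ p)
    (hq : q ≤ r + 1 + s) (hw : tri w + 2 ≤ q) (hp : tri p ≤ r + s) : q ≤ 5 := by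
  have hw1 : 1 ≤ w := le_trans hr hrw
  have hw3 : w ≤ 3 := by
    by_contra hcon
    push_neg at hcon
    have h1 : 2 * (w - 1) ≤ tri (w-1) + 1 := tri_lb _ (by omega)
    have h2 : tri w = tri (w-1) + w := by
      obtain ⟨j, rfl⟩ : ∃ j, w = j + 1 := ⟨w - 1, by omega⟩
      rw [tri_succ]; simp
    -- tri w + 2 ≤ q ≤ w + 1 + p  ⇒ tri (w-1) + 1 ≤ p
    have h3 : tri (w-1) + 1 ≤ p := by omega
    have h4 : 2 * p ≤ tri p + 1 := tri_lb _ (by omega)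
    omega
  have hp3 : p ≤ 3 := by
    by_contra hcon
    push_neg at hcon
    have h4 : 2 * p ≤ tri p + 1 := tri_lb _ (by omega)
    have h5 : p ≤ w + 1 := by omega
    have h6 : p = 4 := by omega
    subst h6
    have : tri 4 = 10 := by simp [tri]
    omega
  have e1 : tri 1 = 1 := by simp [tri]
  have e2 : tri 2 = 3 := by simp [tri]
  have e3 : tri 3 = 6 := by simp [tri]
  have e0 : tri 0 = 0 := by simp [tri]
  interval_cases w <;> interval_cases p <;> omega

example : True := trivial

def L22 : List Bool := [true, false, true, true, true, false, false, true, false, true,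
  false, true, false, true, true, false, true, false, true, true, true, true]

lemma Ln_22 : Ln 22 = L22 := by decide

lemma Ln_le_22 {k : ℕ} (h : k ≤ 22) : Ln k = L22.take k := by
  rw [← Ln_22, Ln_take]; congr 1; omega

def TBody (n q s ℓ : ℕ) : Prop :=
  n = tri q + 1 + s → s ≤ q → ℓ < n → (L22.take ℓ) <:+ (L22.take n) →
    ℓ < q ∨ (s = q ∧ ℓ = q)

instance (n q s ℓ : ℕ) : Decidable (TBody n q s ℓ) := by unfold TBody; infer_instance

def OBody (m p : ℕ) : Prop :=
  1 ≤ m → p + (m-1) ≤ tri m →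
    (L22.take (m-1)) <+: ((L22.take (tri m)).drop p) → p = 0 ∨ p = tri (m-1) + 1

instance (m p : ℕ) : Decidable (OBody m p) := by unfold OBody; infer_instance

set_option maxRecDepth 10000 in
lemma tight_base : ∀ n < 22, ∀ q < 7, ∀ s < 7, ∀ ℓ < 22, TBody n q s ℓ := by decide

set_option maxRecDepth 10000 in
lemma occ_base : ∀ m < 7, ∀ p < 22, OBody m p := by decide

lemma tight : ∀ n q s ℓ, n = tri q + 1 + s → s ≤ q → ℓ < n → Ln ℓ <:+ Ln n →
    ℓ < q ∨ (s = q ∧ ℓ = q) := by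
  intro n
  induction n using Nat.strong_induction_on with
  | _ n IH =>
  intro q s ℓ hn hsq hln hsuf
  by_cases hsmall : n < 22
  · have hq7 : q < 7 := by
      by_contra hc
      push_neg at hc
      have h1 : tri 7 ≤ tri q := triSM.monotone hc
      have h7 : tri 7 = 28 := by simp [tri]
      omega
    have := tight_base n hsmall q hq7 s (by omega) ℓ (by omega)
    unfold TBody at this
    rw [Ln_le_22 (by omega : ℓ ≤ 22), Ln_le_22 (by omega : n ≤ 22)] at hsuf
    exact this hn hsq hln hsuf
  push_neg at hsmall
  have hq1 : 1 ≤ q := by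
    rcases Nat.eq_zero_or_pos q with h | h
    · subst h; simp [tri] at hn; omega
    · exact h
  obtain ⟨j, rfl⟩ : ∃ j, q = j + 1 := ⟨q - 1, by omega⟩
  rcases Nat.lt_or_ge ℓ (j+1) with h | hlq
  · exact Or.inl h
  rcases Nat.lt_or_ge s ℓ with hsl | hsl
  swap
  · right; omega
  have hstruct : Ln n = Ln (tri (j+1)) ++ (!(uu j)) :: Ln s := by
    rw [hn]
    have := struct (j+1) s hq1 hsq
    simpa using this
  obtain ⟨t, ht⟩ := hsuf
  have htlen : t.length = n - ℓ := by
    have := congrArg List.length ht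
    simp [Ln_length] at this; omega
  have hdrop : Ln ℓ = (Ln n).drop (n - ℓ) := by
    rw [← ht, ← htlen, List.drop_left]
  rcases Nat.lt_or_ge (s+1) ℓ with hslt | hsle
  swap
  · -- ℓ = s + 1
    have hle : ℓ = s + 1 := by omega
    have hds : Ln (s+1) = (!(uu j)) :: Ln s := by
      rw [← hle, hdrop, hstruct, show n - ℓ = tri (j+1) by omega,
        List.drop_left' (Ln_length _)]
    have hconst := const_of hds j (by omega)
    simp at hconst
  -- main case : ℓ ≥ s + 2
  set r := ℓ - s - 1 with hr
  have hr1 : 1 ≤ r := by omega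
  have hrq : r < tri (j+1) := by omega
  have hnl : n - ℓ = tri (j+1) - r := by omega
  have hdrop2 : Ln ℓ = (Ln (tri (j+1))).drop (tri (j+1) - r) ++ (!(uu j)) :: Ln s := by
    rw [hdrop, hstruct, hnl, List.drop_append,
      show tri (j+1) - r - (Ln (tri (j+1))).length = 0 by simp [Ln_length]]
    simp
  have hDlen : ((Ln (tri (j+1))).drop (tri (j+1) - r)).length = r := by
    simp [Ln_length]; omega
  have hfirst : Ln r = (Ln (tri (j+1))).drop (tri (j+1) - r) := by
    have h1 : (Ln ℓ).take r = Ln r := by rw [Ln_take]; congr 1; omega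
    rw [← h1, hdrop2, List.take_left' hDlen]
  have hsufr : Ln r <:+ Ln (tri (j+1)) := hfirst ▸ List.drop_suffix _ _
  have hdectri : tri (j+1) = tri j + 1 + j := by rw [tri_succ]; omega
  have h1 := IH (tri (j+1)) (by omega) j j r hdectri (le_refl _) hrq hsufr
  have hur : uu r = !(uu j) := by
    have h2 : (Ln ℓ).drop r = (!(uu j)) :: Ln s := by
      rw [hdrop2]; exact List.drop_left' hDlen
    have h3 := congrArg (fun l => l[0]?) h2
    simp only [List.getElem?_drop] at h3
    rw [Ln_get? (show r + 0 < ℓ by omega)] at h3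
    simpa using h3
  have hrj : r ≤ j := by rcases h1 with h | h <;> omega
  rcases Nat.eq_or_lt_of_le hrj with hrej | hrjlt
  · rw [hrej] at hur; simp at hur
  -- r < j
  have hj2 : 2 ≤ j := by omega
  have hsufq1 : Ln j <:+ Ln (tri (j+1)) := by
    have hs2 := struct j j (by omega) (le_refl _)
    rw [← hdectri] at hs2
    exact ⟨Ln (tri j) ++ [!(uu (j-1))], by rw [hs2]; simp⟩
  have hsufrj : Ln r <:+ Ln j :=
    suffix_of_suffix_len_le hsufr hsufq1 (by simp [Ln_length]; omega)
  obtain ⟨w, s', hs'w, hdecj⟩ := decomp j (by omega)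
  have h2 := IH j (by omega) w s' r hdecj hs'w (by omega) hsufrj
  have hrw : r ≤ w := by rcases h2 with h | h <;> omega
  have hsufs : Ln s <:+ Ln ℓ :=
    ⟨(Ln (tri (j+1))).drop (tri (j+1) - r) ++ [!(uu j)], by rw [hdrop2]; simp⟩
  obtain ⟨p, s'', hs''p, hdecl⟩ := decomp ℓ (by omega)
  have h3 := IH ℓ (by omega) p s'' s hdecl hs''p (by omega) hsufs
  have hsp : s ≤ p := by rcases h3 with h | h <;> omega
  have harith : j + 1 ≤ 5 :=
    arith hr1 hrw hsp (by omega) (by omega) (by omega)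
  have h5 : tri (j+1) ≤ tri 5 := triSM.monotone (by omega)
  have h15 : tri 5 = 15 := by simp [tri]
  omega

lemma occ : ∀ m, 1 ≤ m → ∀ p, p + (m-1) ≤ tri m → Ln (m-1) <+: ((Ln (tri m)).drop p) →
    p = 0 ∨ p = tri (m-1) + 1 := by
  intro m
  induction m with
  | zero => omega
  | succ k ih =>
    intro _ p hlen hp
    simp only [Nat.add_sub_cancel] at hlen hp ⊢
    by_cases hsmall : k + 1 < 7
    · have h21 : tri (k+1) ≤ 21 := by
        have h1 : tri (k+1) ≤ tri 6 := triSM.monotone (by omega)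
        have h6 : tri 6 = 21 := by simp [tri]
        omega
      have hb := occ_base (k+1) hsmall p (by omega)
      unfold OBody at hb
      simp only [Nat.add_sub_cancel] at hb
      rw [Ln_le_22 (by omega : k ≤ 22), Ln_le_22 (by omega : tri (k+1) ≤ 22)] at hp
      exact hb (by omega) hlen hp
    push_neg at hsmall
    obtain ⟨i, rfl⟩ : ∃ i, k = i + 1 := ⟨k - 1, by omega⟩
    simp only [Nat.add_sub_cancel] at ih
    have hk6 : 6 ≤ i + 1 := by omega
    rcases Nat.eq_zero_or_pos p with hp0 | hp1
    · exact Or.inl hp0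
    by_cases hpe : p = tri (i+1) + 1
    · exact Or.inr hpe
    have hlen' : p + (i+1) ≤ tri (i+2) := hlen
    have htsk : tri (i+2) = tri (i+1) + (i+2) := tri_succ (i+1)
    have htk : tri (i+1) = tri i + (i+1) := tri_succ i
    have hptk : p ≤ tri (i+1) := by omega
    have hstruct : Ln (tri (i+2)) = Ln (tri (i+1)) ++ (!(uu i)) :: Ln (i+1) := by
      have h := struct (i+1) (i+1) (by omega) (le_refl _)
      rw [show tri (i+1) + 1 + (i+1) = tri (i+2) from by omega] at h
      simpa using h
    have hdropstruct : (Ln (tri (i+2))).drop p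
        = (Ln (tri (i+1))).drop p ++ (!(uu i)) :: Ln (i+1) := by
      rw [hstruct, List.drop_append,
        show p - (Ln (tri (i+1))).length = 0 from by simp [Ln_length]; omega]
      simp
    obtain ⟨t2, ht2⟩ := hp
    have hkey0 : Ln (i+1) = ((Ln (tri (i+2))).drop p).take (i+1) := by
      rw [← ht2, List.take_left' (Ln_length (i+1))]
    set t' := tri (i+1) - p with ht'
    have hDlen : ((Ln (tri (i+1))).drop p).length = t' := by simp [Ln_length, ht']
    rcases Nat.lt_or_ge t' (i+1) with htlt | htge
    swap
    · -- occurrence entirely inside W (i+1)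
      have hin : Ln (i+1) = ((Ln (tri (i+1))).drop p).take (i+1) := by
        rw [hkey0, hdropstruct, List.take_append,
          show (i+1) - ((Ln (tri (i+1))).drop p).length = 0 from by rw [hDlen]; omega]
        simp
      have hpre : Ln i <+: (Ln (tri (i+1))).drop p :=
        (Ln_prefix (by omega : i ≤ i + 1)).trans (hin ▸ List.take_prefix _ _)
      have := ih (by omega) p (by omega) hpre
      omega
    · -- straddling occurrence
      obtain ⟨d, hd⟩ : ∃ d, (i+1) - t' = d + 1 := ⟨(i+1) - t' - 1, by omega⟩
      have hdd : d = i - t' := by omega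
      have hkey : Ln (i+1) = (Ln (tri (i+1))).drop p ++ (!(uu i)) :: Ln d := by
        rw [hkey0, hdropstruct, List.take_append,
          List.take_of_length_le (by rw [hDlen]; omega), hDlen, hd,
          List.take_succ_cons, Ln_take, show min d (i+1) = d from by omega]
      have hut : uu t' = !(uu i) := by
        have h2 : (Ln (i+1)).drop t' = (!(uu i)) :: Ln d := by
          rw [hkey]; exact List.drop_left' hDlen
        have h3 := congrArg (fun l => l[0]?) h2
        simp only [List.getElem?_drop] at h3
        rw [Ln_get? (show t' + 0 < i + 1 by omega)] at h3
        simpa using h3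
      rcases Nat.eq_or_lt_of_le (show t' ≤ i by omega) with hte | htlt2
      · rw [hte] at hut
        simp at hut
      rcases Nat.eq_zero_or_pos t' with ht0 | ht1
      · -- t' = 0 : p = tri (i+1)
        have hD0 : (Ln (tri (i+1))).drop p = [] := by
          apply List.eq_nil_of_length_eq_zero
          rw [hDlen, ht0]
        rw [hD0, List.nil_append] at hkey
        have hdi : d = i := by omega
        rw [hdi] at hkey
        have hco := const_of hkey i le_rfl
        simp at hco
      · -- 1 ≤ t' ≤ i - 1
        have hsuft : Ln t' <:+ Ln (tri (i+1)) := by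
          have h1 : Ln t' = (Ln (tri (i+1))).drop p := by
            have h2 : (Ln (i+1)).take t' = Ln t' := by rw [Ln_take]; congr 1; omega
            rw [← h2, hkey, List.take_left' hDlen]
          rw [h1]; exact List.drop_suffix _ _
        have hsufk1 : Ln i <:+ Ln (tri (i+1)) := by
          have hs2 := struct i i (by omega) (le_refl _)
          rw [show tri i + 1 + i = tri (i+1) from by omega] at hs2
          exact ⟨Ln (tri i) ++ [!(uu (i-1))], by rw [hs2]; simp⟩
        have hsufti : Ln t' <:+ Ln i :=
          suffix_of_suffix_len_le hsuft hsufk1 (by simp [Ln_length]; omega)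
        obtain ⟨w, s', hs'w, hdeci⟩ := decomp i (by omega)
        have h2 := tight i w s' t' hdeci hs'w (by omega) hsufti
        have htw : t' ≤ w := by rcases h2 with h | h <;> omega
        have hsufs : Ln d <:+ Ln (i+1) :=
          ⟨(Ln (tri (i+1))).drop p ++ [!(uu i)], by rw [hkey]; simp⟩
        obtain ⟨pp, s'', hs''pp, hdeck⟩ := decomp (i+1) (by omega)
        have h3 := tight (i+1) pp s'' d hdeck hs''pp (by omega) hsufs
        have hspp : d ≤ pp := by rcases h3 with h | h <;> omega
        have harith : i + 1 ≤ 5 :=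
          arith ht1 htw hspp (by omega) (by omega) (by omega)
        omega

lemma closed_tri (m : ℕ) (hm : 1 ≤ m) : IsClosedWord (Ln (tri m)) := by
  rcases Nat.eq_or_lt_of_le hm with h | h
  · left; rw [Ln_length, ← h]; simp [tri]
  · obtain ⟨i, hi, rfl⟩ : ∃ i, 1 ≤ i ∧ m = i + 1 := ⟨m - 1, by omega, by omega⟩
    have htk : tri (i+1) = tri i + (i+1) := tri_succ i
    have hsuf : Ln (tri (i+1)) = Ln (tri i) ++ (!(uu (i-1))) :: Ln i := by
      have h := struct i i hi (le_refl _)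
      rw [show tri i + 1 + i = tri (i+1) from by omega] at h
      exact h
    right
    refine ⟨Ln i, ⟨?_, ?_, ?_⟩, ?_⟩
    · intro hcon
      have := congrArg List.length hcon
      simp [Ln_length] at this
      omega
    · exact Ln_prefix (by omega)
    · exact ⟨Ln (tri i) ++ [!(uu (i-1))], by rw [hsuf]; simp⟩
    · intro p hocc
      obtain ⟨h1, h2⟩ := hocc
      rw [Ln_length, Ln_length] at h1
      have := occ (i+1) (by omega) p (by simpa using h1) (by simpa using h2)
      simp only [Nat.add_sub_cancel] at this
      rw [Ln_length, Ln_length]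
      omega

lemma open_non_tri (q s : ℕ) (hq : 1 ≤ q) (hs : s < q) :
    ¬ IsClosedWord (Ln (tri q + 1 + s)) := by
  intro hcl
  have hqn : q ≤ tri q := le_tri q
  rcases hcl with hlen | ⟨β, ⟨hne, hpre, hsuf⟩, hocc⟩
  · rw [Ln_length] at hlen; omega
  · have hβlen : β.length ≤ tri q + 1 + s := by
      have := hpre.length_le
      simpa [Ln_length] using this
    have hβ : β = Ln β.length := by
      obtain ⟨t, ht⟩ := hpre
      have h1 : (Ln (tri q + 1 + s)).take β.length = β := by
        rw [← ht, List.take_left' rfl]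
      rw [Ln_take] at h1
      rw [show min β.length (tri q + 1 + s) = β.length from by omega] at h1
      exact h1.symm
    have hℓn : β.length < tri q + 1 + s := by
      rcases Nat.eq_or_lt_of_le hβlen with he | hlt
      · exfalso
        apply hne
        rw [hβ, he]
      · exact hlt
    have htight := tight (tri q + 1 + s) q s β.length rfl (by omega) hℓn (hβ ▸ hsuf)
    have hlq : β.length < q := by rcases htight with h | h <;> omega
    rcases Nat.eq_or_lt_of_le hq with hq1 | hq2
    · -- q = 1, β = []
      have hb0 : β.length = 0 := by omega
      have hβnil : β = [] := List.eq_nil_of_length_eq_zero hb0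
      have hocc1 := hocc 1 ⟨by simp [Ln_length, hβnil]; omega, by simp [hβnil]⟩
      rw [Ln_length, hβnil] at hocc1
      simp at hocc1
      omega
    · -- q ≥ 2
      obtain ⟨j, rfl⟩ : ∃ j, q = j + 2 := ⟨q - 2, by omega⟩
      have ht1 : tri (j+1) = tri j + (j+1) := tri_succ j
      have ht2 : tri (j+2) = tri (j+1) + (j+2) := tri_succ (j+1)
      have h1 : Ln (tri (j+2) + 1 + s) = Ln (tri (j+2)) ++ (!(uu (j+1))) :: Ln s := by
        have h := struct (j+2) s (by omega) (by omega)
        simpa using h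
      have h2 : Ln (tri (j+2)) = Ln (tri (j+1)) ++ (!(uu j)) :: Ln (j+1) := by
        have h := struct (j+1) (j+1) (by omega) (le_refl _)
        rw [show tri (j+1) + 1 + (j+1) = tri (j+2) from by omega] at h
        simpa using h
      have hdrop : (Ln (tri (j+2) + 1 + s)).drop (tri (j+1) + 1)
          = Ln (j+1) ++ (!(uu (j+1))) :: Ln s := by
        rw [h1, h2, List.append_assoc, List.cons_append]
        rw [show tri (j+1) + 1 = (Ln (tri (j+1))).length + 1 from by rw [Ln_length]]
        rw [List.drop_append]
        simp
      have hocc2 := hocc (tri (j+1) + 1) ⟨by first | omega | (simp [Ln_length]; omega), by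
        rw [hdrop, hβ]
        exact (Ln_prefix (by omega : β.length ≤ j + 1)).trans (List.prefix_append _ _)⟩
      rw [Ln_length] at hocc2
      omega

lemma closed_iff (n : ℕ) (hn : 1 ≤ n) :
    IsClosedWord (Ln n) ↔ ∃ k, 1 ≤ k ∧ n = tri k := by
  constructor
  · intro h
    obtain ⟨q, s, hsq, rfl⟩ := decomp n hn
    rcases Nat.eq_or_lt_of_le hsq with he | hlt
    · exact ⟨q + 1, by omega, by rw [tri_succ]; omega⟩
    · exact absurd h (open_non_tri q s (by omega) hlt)
  · rintro ⟨k, hk, rfl⟩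
    exact closed_tri k hk

lemma two_tri (k : ℕ) : 2 * tri k = k * (k+1) := by
  induction k with
  | zero => rfl
  | succ n ih =>
    rw [tri_succ]
    have h : (n+1) * (n+1+1) = n * (n+1) + 2*(n+1) := by ring
    linarith

lemma tri_div (k : ℕ) : k * (k+1) / 2 = tri k := by
  rw [← two_tri]
  exact Nat.mul_div_cancel_left _ (by norm_num)

open Classical in
lemma OCval_eq (n : ℕ) (hn : 1 ≤ n) :
    OCval (Ln n) n = if ∃ k, 1 ≤ k ∧ n = k * (k+1)/2 then 1 else 0 := by
  have htake : (Ln n).take n = Ln n := by rw [Ln_take]; simp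
  have hiff : IsClosedWord (Ln n) ↔ ∃ k, 1 ≤ k ∧ n = k*(k+1)/2 := by
    rw [closed_iff n hn]
    apply exists_congr
    intro k
    rw [tri_div]
  unfold OCval
  rw [htake]
  by_cases h : IsClosedWord (Ln n)
  · rw [if_pos h, if_pos (hiff.mp h)]
  · rw [if_neg h, if_neg (fun hc => h (hiff.mpr hc))]


lemma sum_eq (N : ℕ) : (∑ k ∈ Finset.Icc 1 N, (k+1)) + 1 = tri (N+1) := by
  induction N with
  | zero => simp [tri]
  | succ n ih =>
    rw [Finset.sum_Icc_succ_top (by omega), tri_succ (n+1)]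
    omega

open Classical in
lemma ocRuns_eq (N L : ℕ) (hN : 1 ≤ N) (hL : L + 1 = tri (N+1)) : ocRuns (Ln L) = N := by
  have hOC1 : ∀ j, 1 ≤ j → j ≤ L → (OCval (Ln L) j = 1 ↔ ∃ k, 1 ≤ k ∧ j = tri k) := by
    intro j h1 h2
    have htake : (Ln L).take j = Ln j := by rw [Ln_take]; congr 1; omega
    unfold OCval
    rw [htake]
    by_cases h : IsClosedWord (Ln j)
    · rw [if_pos h]
      exact ⟨fun _ => (closed_iff j h1).mp h, fun _ => rfl⟩
    · rw [if_neg h]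
      exact ⟨fun hc => absurd hc (by norm_num),
        fun hc => absurd ((closed_iff j h1).mpr hc) h⟩
  have hOC0 : ∀ j, 1 ≤ j → j ≤ L → (OCval (Ln L) j = 0 ↔ ¬ ∃ k, 1 ≤ k ∧ j = tri k) := by
    intro j h1 h2
    have htake : (Ln L).take j = Ln j := by rw [Ln_take]; congr 1; omega
    unfold OCval
    rw [htake]
    by_cases h : IsClosedWord (Ln j)
    · rw [if_pos h]
      exact ⟨fun hc => absurd hc (by norm_num),
        fun hc => absurd ((closed_iff j h1).mp h) hc⟩
    · rw [if_neg h]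
      exact ⟨fun _ hc => absurd ((closed_iff j h1).mpr hc) h, fun _ => rfl⟩
  unfold ocRuns
  rw [Ln_length]
  have hset : (Finset.Icc 1 L).filter
      (fun i => OCval (Ln L) i = 1 ∧ (i = 1 ∨ OCval (Ln L) (i-1) = 0))
      = (Finset.Icc 1 N).image tri := by
    ext i
    simp only [Finset.mem_filter, Finset.mem_image, Finset.mem_Icc]
    constructor
    · rintro ⟨⟨hi1, hiL⟩, hv1, _⟩
      obtain ⟨k, hk1, rfl⟩ := (hOC1 i hi1 hiL).mp hv1
      refine ⟨k, ⟨hk1, ?_⟩, rfl⟩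
      by_contra hc
      push_neg at hc
      have := triSM.monotone (show N+1 ≤ k by omega)
      omega
    · rintro ⟨k, ⟨hk1, hkN⟩, rfl⟩
      have hkL : tri k ≤ L := by
        have h1 : tri k < tri (N+1) := triSM (by omega)
        omega
      have hk1' : 1 ≤ tri k := le_trans hk1 (le_tri k)
      refine ⟨⟨hk1', hkL⟩, (hOC1 _ hk1' hkL).mpr ⟨k, hk1, rfl⟩, ?_⟩
      rcases Nat.eq_or_lt_of_le hk1 with he | h2
      · left; rw [← he]; simp [tri]
      · right
        obtain ⟨j, rfl⟩ : ∃ j, k = j + 2 := ⟨k - 2, by omega⟩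
        have htj : tri (j+2) = tri (j+1) + (j+2) := tri_succ (j+1)
        have hiv : tri (j+2) - 1 = tri (j+1) + 1 + j := by omega
        rw [hiv]
        apply (hOC0 _ (by omega) (by omega)).mpr
        rintro ⟨k', hk'1, hk'e⟩
        have hgt : j+1 < k' := by
          by_contra hc
          push_neg at hc
          have := triSM.monotone hc
          omega
        have := triSM.monotone (show j+2 ≤ k' by omega)
        omega
  rw [hset, Finset.card_image_of_injOn (fun a _ b _ h => triSM.injective h), Nat.card_Icc]
  omega

open Classical in
/-- There is an infinite binary string whose OC array (entrywise,
on every prefix) is `∏_{k>0} 1 0^k`, i.e. the `n`-th entry is `1` exactly when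
`n` is a triangular number `k(k+1)/2` with `k ≥ 1`; consequently for every
`N ≥ 1` its prefix of length `Σ_{k=1}^{N}(k+1)` has exactly `N` runs of `1`s
in its OC array, so the `O(√n)` bound on the number of runs is tight. -/
theorem statement_15 :
    ∃ u : ℕ → Bool,
      (∀ n : ℕ, 1 ≤ n →
        OCval ((List.range n).map u) n =
          if ∃ k : ℕ, 1 ≤ k ∧ n = k * (k + 1) / 2 then 1 else 0) ∧
      (∀ N : ℕ, 1 ≤ N →
        ocRuns ((List.range (∑ k ∈ Finset.Icc 1 N, (k + 1))).map u) = N) := by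
  classical
  refine ⟨uu, ?_, ?_⟩
  · intro n hn
    exact OCval_eq n hn
  · intro N hN
    exact ocRuns_eq N _ hN (sum_eq N)
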